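/- Let H₁ = Σ_{σ ∈ S₃} σ ∈ F₂[S₃]. The quotient ring F₂[S₃]/(H₁) by the two-sided ideal generated by H₁ has exactly 32 elements and its unit group is isomorphic to S₃. -/

import Mathlib

set_option maxRecDepth 100000

namespace QuotH1
open Equiv MonoidAlgebra Finset

abbrev G := Equiv.Perm (Fin 3)
abbrev R := MonoidAlgebra (ZMod 2) G

noncomputable def H : R := ∑ σ : G, of (ZMod 2) G σ

abbrev MM := ZMod 2 × Matrix (Fin 3) (Fin 3) (ZMod 2)

def P (σ : G) : Matrix (Fin 3) (Fin 3) (ZMod 2) := fun i j => if σ j = i then 1 else 0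

def Phi : G →* MM where
  toFun σ := (1, P σ)
  map_one' := by decide
  map_mul' := by decide

noncomputable def Psi : R →ₐ[ZMod 2] MM := MonoidAlgebra.lift (ZMod 2) MM G Phi

def T (c : G → ZMod 2) : MM := ∑ σ : G, c σ • Phi σ

lemma TK : ∀ c : G → ZMod 2, T c = 0 → c = (fun _ => 0) ∨ c = (fun _ => 1) := by decide

lemma TU : ∀ c : G → ZMod 2, (∃ d, T c * T d = 1) → ∃ σ, T c = Phi σ := by decide

lemma Phi_inj : ∀ σ τ : G, Phi σ = Phi τ → σ = τ := by decide

lemma sum_Phi : ∑ σ : G, Phi σ = 0 := by decide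

-- every x : R is the universal sum of its coefficients
lemma eq_sum (x : R) : x = ∑ σ : G, x.coeff σ • of (ZMod 2) G σ := by
  have h : ∀ σ : G, x.coeff σ • of (ZMod 2) G σ = MonoidAlgebra.ofCoeff (Finsupp.single σ (x.coeff σ)) := by
    intro σ
    rw [MonoidAlgebra.of_apply]
    rw [show MonoidAlgebra.single σ (1 : ZMod 2) = MonoidAlgebra.ofCoeff (Finsupp.single σ (1 : ZMod 2)) from rfl]
    rw [← MonoidAlgebra.ofCoeff_smul, Finsupp.smul_single, smul_eq_mul, mul_one]
  simp_rw [h]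
  classical
  rw [← MonoidAlgebra.ofCoeff_sum]
  apply MonoidAlgebra.coeff_injective
  rw [MonoidAlgebra.coeff_ofCoeff]
  conv_lhs => rw [← Finsupp.sum_single x.coeff]
  rw [Finsupp.sum]
  exact Finset.sum_subset (Finset.subset_univ _)
    (fun a _ ha => by rw [Finsupp.notMem_support_iff.mp ha, Finsupp.single_zero])

lemma Psi_apply (x : R) : Psi x = T x.coeff := by
  conv_lhs => rw [eq_sum x]
  rw [map_sum]
  unfold T
  refine Finset.sum_congr rfl fun σ _ => ?_
  rw [map_smul, Psi, MonoidAlgebra.lift_of]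

lemma H_coe : ⇑H.coeff = fun _ : G => (1 : ZMod 2) := by
  funext τ
  rw [H]
  rw [show ⇑(∑ σ : G, of (ZMod 2) G σ).coeff τ = ∑ σ : G, (of (ZMod 2) G σ).coeff τ by
    rw [MonoidAlgebra.coeff_sum]; exact Finsupp.finset_sum_apply _ _ _]
  simp [MonoidAlgebra.of_apply, Finsupp.single_apply]

lemma H_ne : H ≠ 0 := by
  intro h
  have h1 : (H.coeff : G → ZMod 2) 1 = 1 := congrFun H_coe 1
  rw [h] at h1
  simp at h1

lemma Psi_H : Psi H = 0 := by
  rw [H, map_sum]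
  have : ∀ σ : G, Psi (of (ZMod 2) G σ) = Phi σ := fun σ => MonoidAlgebra.lift_of _ σ
  simp_rw [this]
  exact sum_Phi

lemma Psi_of (σ : G) : Psi (of (ZMod 2) G σ) = Phi σ := MonoidAlgebra.lift_of _ σ

lemma Psi_ker {x : R} (h : Psi x = 0) : x = 0 ∨ x = H := by
  rw [Psi_apply] at h
  rcases TK _ h with h0 | h1
  · left
    exact MonoidAlgebra.ext (Finsupp.ext fun τ => congrFun h0 τ)
  · right
    exact MonoidAlgebra.ext (Finsupp.ext fun τ => by rw [congrFun h1 τ, congrFun H_coe τ])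

lemma of_mul_H (σ : G) : of (ZMod 2) G σ * H = H := by
  rw [H, Finset.mul_sum]
  have h : ∀ τ : G, of (ZMod 2) G σ * of (ZMod 2) G τ = of (ZMod 2) G (σ * τ) :=
    fun τ => (map_mul (of (ZMod 2) G) σ τ).symm
  simp_rw [h]
  exact Equiv.sum_comp (Equiv.mulLeft σ) (fun τ => of (ZMod 2) G τ)

lemma H_mul_of (σ : G) : H * of (ZMod 2) G σ = H := by
  rw [H, Finset.sum_mul]
  have h : ∀ τ : G, of (ZMod 2) G τ * of (ZMod 2) G σ = of (ZMod 2) G (τ * σ) :=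
    fun τ => (map_mul (of (ZMod 2) G) τ σ).symm
  simp_rw [h]
  exact Equiv.sum_comp (Equiv.mulRight σ) (fun τ => of (ZMod 2) G τ)

lemma H_add_H : H + H = 0 := by
  rw [← two_smul (ZMod 2) H, show (2 : ZMod 2) = 0 from rfl, zero_smul]

lemma neg_H : -H = H := neg_eq_of_add_eq_zero_left H_add_H

lemma zmod2_cases : ∀ a : ZMod 2, a = 0 ∨ a = 1 := by decide

lemma mul_H (x : R) : x * H = 0 ∨ x * H = H := by
  have hx : x * H = (∑ σ : G, x.coeff σ) • H := by
    conv_lhs => rw [eq_sum x]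
    rw [Finset.sum_mul, Finset.sum_smul]
    exact Finset.sum_congr rfl fun σ _ => by rw [smul_mul_assoc, of_mul_H]
  rcases zmod2_cases (∑ σ : G, x.coeff σ) with h | h <;> rw [hx, h]
  · left; rw [zero_smul]
  · right; rw [one_smul]

lemma H_mul (x : R) : H * x = 0 ∨ H * x = H := by
  have hx : H * x = (∑ σ : G, x.coeff σ) • H := by
    conv_lhs => rw [eq_sum x]
    rw [Finset.mul_sum, Finset.sum_smul]
    exact Finset.sum_congr rfl fun σ _ => by rw [mul_smul_comm, H_mul_of]
  rcases zmod2_cases (∑ σ : G, x.coeff σ) with h | h <;> rw [hx, h]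
  · left; rw [zero_smul]
  · right; rw [one_smul]

/-- the concrete two-sided ideal `{0, H}` -/
noncomputable def J : TwoSidedIdeal R :=
  TwoSidedIdeal.mk' {0, H}
    (Or.inl rfl)
    (by rintro x y (rfl | rfl) (rfl | rfl) <;> simp [H_add_H])
    (by rintro x (rfl | rfl) <;> simp [neg_H])
    (by rintro x y (rfl | rfl)
        · simp
        · simpa using mul_H x)
    (by rintro x y (rfl | rfl)
        · simp
        · simpa using H_mul y)

lemma mem_span (x : R) : x ∈ TwoSidedIdeal.span {H} ↔ (x = 0 ∨ x = H) := by
  constructor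
  · intro hx
    have := TwoSidedIdeal.mem_span_iff.mp hx J
      (by rintro y rfl
          rw [SetLike.mem_coe, J]; erw [TwoSidedIdeal.mem_mk']
          exact Or.inr rfl)
    rw [J] at this; erw [TwoSidedIdeal.mem_mk'] at this
    simpa using this
  · rintro (rfl | rfl)
    · exact TwoSidedIdeal.zero_mem _
    · exact TwoSidedIdeal.subset_span rfl

lemma crel (x y : R) :
    (TwoSidedIdeal.span {H}).ringCon x y ↔ (x - y = 0 ∨ x - y = H) := by
  rw [TwoSidedIdeal.rel_iff, mem_span]


noncomputable abbrev c : RingCon R := (TwoSidedIdeal.span {H}).ringCon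
noncomputable abbrev Q := c.Quotient

/-- `{0, H}` as an additive subgroup. -/
noncomputable def A : AddSubgroup R where
  carrier := {0, H}
  zero_mem' := Or.inl rfl
  add_mem' := by rintro x y (rfl | rfl) (rfl | rfl) <;> simp [H_add_H]
  neg_mem' := by rintro x (rfl | rfl) <;> simp [neg_H]

noncomputable def quotEquiv : Q ≃ (R ⧸ A) :=
  Quotient.congr (Equiv.refl R) (fun a b => by
    refine Iff.trans (crel a b) (Iff.symm (Iff.trans QuotientAddGroup.leftRel_apply ?_))
    show -a + b ∈ ({0, H} : Set R) ↔ _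
    have e : -a + b = -(a - b) := by abel
    rw [e]
    constructor
    · rintro (h | h)
      · left; rw [← neg_neg (a - b), h, neg_zero]
      · right; rw [← neg_neg (a - b), h, neg_H]
    · rintro (h | h) <;> rw [h]
      · exact Or.inl neg_zero
      · exact Or.inr neg_H)

lemma card_R : Nat.card R = 64 := by
  have e : R ≃ (G → ZMod 2) := MonoidAlgebra.coeffEquiv.trans Finsupp.equivFunOnFinite
  rw [Nat.card_congr e, Nat.card_eq_fintype_card, Fintype.card_fun, Fintype.card_perm]
  norm_num [ZMod.card, Nat.factorial]

lemma card_A : Nat.card A = 2 := by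
  have : Nat.card A = Nat.card ({0, H} : Set R) := rfl
  rw [this, Nat.card_coe_set_eq, Set.ncard_pair (fun h => H_ne h.symm)]

lemma card_Q : Nat.card Q = 32 := by
  have h := AddSubgroup.card_eq_card_quotient_mul_card_addSubgroup A
  rw [card_R, card_A] at h
  rw [Nat.card_congr quotEquiv]
  omega

/-- the canonical map `S₃ →* Qˣ` -/
noncomputable def g : G →* Qˣ :=
  ((RingCon.mk' c).toMonoidHom.comp (of (ZMod 2) G)).toHomUnits

lemma g_val (σ : G) : ((g σ : Qˣ) : Q) = RingCon.mk' c (of (ZMod 2) G σ) := rfl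

lemma g_inj : Function.Injective g := by
  intro σ τ h
  have h' : RingCon.mk' c (of (ZMod 2) G σ) = RingCon.mk' c (of (ZMod 2) G τ) := by
    rw [← g_val, ← g_val, h]
  have hc : c (of (ZMod 2) G σ) (of (ZMod 2) G τ) := (RingCon.eq c).mp h'
  rcases (crel _ _).mp hc with h0 | hH
  · exact MonoidAlgebra.of_injective (sub_eq_zero.mp h0)
  · exfalso
    have hps : Psi (of (ZMod 2) G σ - of (ZMod 2) G τ) = 0 := by rw [hH, Psi_H]
    rw [map_sub, Psi_of, Psi_of, sub_eq_zero] at hps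
    have := Phi_inj σ τ hps
    subst this
    rw [sub_self] at hH
    exact H_ne hH.symm

lemma mk_surj : Function.Surjective (RingCon.mk' c) := fun q => Quot.exists_rep q

lemma g_surj : Function.Surjective g := by
  intro u
  obtain ⟨x, hx⟩ := mk_surj (u : Q)
  obtain ⟨y, hy⟩ := mk_surj ((u⁻¹ : Qˣ) : Q)
  have h1 : c (x * y) 1 := by
    apply (RingCon.eq c).mp
    show (RingCon.mk' c) (x * y) = (RingCon.mk' c) 1
    rw [map_mul, map_one, hx, hy]
    exact_mod_cast u.mul_inv
  have hU : Psi x * Psi y = 1 := by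
    rcases (crel _ _).mp h1 with h0 | hH
    · rw [← map_mul, sub_eq_zero.mp h0, map_one]
    · have : Psi (x * y - 1) = 0 := by rw [hH, Psi_H]
      rw [map_sub, map_one, map_mul, sub_eq_zero] at this
      exact this
  obtain ⟨σ, hσ⟩ := TU x.coeff ⟨y.coeff, by rw [← Psi_apply, ← Psi_apply]; exact hU⟩
  have hker : Psi (x - of (ZMod 2) G σ) = 0 := by
    rw [map_sub, Psi_of, Psi_apply, hσ, sub_self]
  have hc : c x (of (ZMod 2) G σ) := by
    rw [crel]
    rcases Psi_ker hker with h | h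
    · exact Or.inl h
    · exact Or.inr h
  refine ⟨σ, Units.ext ?_⟩
  rw [g_val, ← hx]
  exact ((RingCon.eq c).mpr hc).symm

noncomputable def unitsEquiv : Qˣ ≃* G :=
  (MulEquiv.ofBijective g ⟨g_inj, g_surj⟩).symm

end QuotH1

theorem quotient_by_H1 :
    Nat.card
      ((TwoSidedIdeal.span
        {∑ σ : Equiv.Perm (Fin 3),
          MonoidAlgebra.of (ZMod 2) (Equiv.Perm (Fin 3)) σ}).ringCon.Quotient) = 32 ∧
    Nonempty
      (((TwoSidedIdeal.span
        {∑ σ : Equiv.Perm (Fin 3),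
          MonoidAlgebra.of (ZMod 2) (Equiv.Perm (Fin 3)) σ}).ringCon.Quotient)ˣ ≃*
        Equiv.Perm (Fin 3)) :=
  ⟨QuotH1.card_Q, ⟨QuotH1.unitsEquiv⟩⟩
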